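/- Let P be a bounded open convex subset of ℝⁿ with positive volume containing the origin in its interior. Then the function F(c) = ∫_P e^{c·x} dx is proper, i.e., F(c) → ∞ as |c| → ∞. -/

import Mathlib

open MeasureTheory Filter Metric

theorem stmt2 (n : ℕ) (P : Set (EuclideanSpace ℝ (Fin n)))
    (hopen : IsOpen P) (hconv : Convex ℝ P) (hbdd : Bornology.IsBounded P)
    (hpos : 0 < volume P) (h0 : (0 : EuclideanSpace ℝ (Fin n)) ∈ P) :
    Tendsto (fun c : EuclideanSpace ℝ (Fin n) => ∫ x in P, Real.exp (inner ℝ c x : ℝ))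
      (comap (fun c => ‖c‖) atTop) atTop := by
  obtain ⟨r, hr, hball⟩ := Metric.isOpen_iff.1 hopen 0 h0
  set ρ : ℝ := r / 4 with hρ
  have hρpos : 0 < ρ := by positivity
  set V : ℝ := (volume (ball (0 : EuclideanSpace ℝ (Fin n)) ρ)).toReal with hV
  have hVpos : 0 < V := by
    apply ENNReal.toReal_pos
    · exact (measure_ball_pos _ _ hρpos).ne'
    · exact measure_ball_lt_top.ne
  have hint : ∀ c : EuclideanSpace ℝ (Fin n),
      IntegrableOn (fun x => Real.exp (inner ℝ c x : ℝ)) P volume := by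
    intro c
    have hc : IsCompact (closure P) := hbdd.isCompact_closure
    have hcont : Continuous (fun x : EuclideanSpace ℝ (Fin n) => Real.exp (inner ℝ c x : ℝ)) :=
      Real.continuous_exp.comp (continuous_const.inner continuous_id)
    exact (hcont.continuousOn.integrableOn_compact hc).mono_set subset_closure
  have key : ∀ c : EuclideanSpace ℝ (Fin n), 1 ≤ ‖c‖ →
      V * Real.exp (r / 2 * ‖c‖) ≤ ∫ x in P, Real.exp (inner ℝ c x : ℝ) := by
    intro c hc
    have hcpos : (0 : ℝ) < ‖c‖ := lt_of_lt_of_le one_pos hc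
    set p : EuclideanSpace ℝ (Fin n) := ((3 * r / 4) * ‖c‖⁻¹) • c with hp
    have hpnorm : ‖p‖ = 3 * r / 4 := by
      rw [hp, norm_smul, Real.norm_eq_abs, abs_mul,
        abs_of_pos (by positivity : (0:ℝ) < 3 * r / 4),
        abs_of_pos (by positivity : (0:ℝ) < ‖c‖⁻¹)]
      field_simp
    have hsub : ball p ρ ⊆ P := by
      intro x hx
      apply hball
      rw [mem_ball, dist_zero_right]
      have h1 : ‖x - p‖ < ρ := by rwa [mem_ball, dist_eq_norm] at hx
      have h2 := norm_add_le (x - p) p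
      rw [sub_add_cancel] at h2
      rw [hpnorm] at h2
      rw [hρ] at h1
      linarith
    have hinner : ∀ x ∈ ball p ρ, r / 2 * ‖c‖ ≤ (inner ℝ c x : ℝ) := by
      intro x hx
      have h1 : ‖x - p‖ < ρ := by rwa [mem_ball, dist_eq_norm] at hx
      have hip : (inner ℝ c p : ℝ) = 3 * r / 4 * ‖c‖ := by
        rw [hp, real_inner_smul_right, real_inner_self_eq_norm_sq]
        field_simp
      have h2 : -(‖c‖ * ‖x - p‖) ≤ (inner ℝ c (x - p) : ℝ) := by
        have ha := abs_real_inner_le_norm c (x - p)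
        have hb := neg_abs_le (inner ℝ c (x - p) : ℝ)
        linarith
      have h3 : (inner ℝ c x : ℝ) = (inner ℝ c p : ℝ) + (inner ℝ c (x - p) : ℝ) := by
        rw [← inner_add_right]
        norm_num
      have h4 : ‖c‖ * ‖x - p‖ ≤ ‖c‖ * ρ :=
        mul_le_mul_of_nonneg_left h1.le (norm_nonneg c)
      rw [h3, hip]
      rw [hρ] at h4
      nlinarith
    have hball_int : IntegrableOn (fun x => Real.exp (inner ℝ c x : ℝ)) (ball p ρ) volume :=
      (hint c).mono_set hsub
    calc V * Real.exp (r / 2 * ‖c‖)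
        = ∫ _x in ball p ρ, Real.exp (r / 2 * ‖c‖) := by
          rw [setIntegral_const, measureReal_def, Measure.addHaar_ball_center, smul_eq_mul, hV]
      _ ≤ ∫ x in ball p ρ, Real.exp (inner ℝ c x : ℝ) := by
          apply setIntegral_mono_on
          · exact integrableOn_const measure_ball_lt_top.ne
          · exact hball_int
          · exact measurableSet_ball
          · intro x hx
            exact Real.exp_le_exp.2 (hinner x hx)
      _ ≤ ∫ x in P, Real.exp (inner ℝ c x : ℝ) := by
          apply setIntegral_mono_set (hint c)
          · exact Eventually.of_forall fun x => (Real.exp_pos _).le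
          · exact HasSubset.Subset.eventuallyLE hsub
  have h1 : Tendsto (fun R : ℝ => V * Real.exp (r / 2 * R)) atTop atTop := by
    apply Tendsto.const_mul_atTop hVpos
    exact Real.tendsto_exp_atTop.comp (Tendsto.const_mul_atTop (by positivity) tendsto_id)
  have h2 : Tendsto (fun c : EuclideanSpace ℝ (Fin n) => V * Real.exp (r / 2 * ‖c‖))
      (comap (fun c : EuclideanSpace ℝ (Fin n) => ‖c‖) atTop) atTop :=
    h1.comp tendsto_comap
  apply tendsto_atTop_mono' _ _ h2
  exact (tendsto_comap.eventually_ge_atTop 1).mono fun c hc => key c hc
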